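/- A countable past-finite partial order has an infinite level (i.e., some k for which the set of elements of level k is infinite) if and only if it contains an infinite antichain all of whose elements have the same past. -/
import Mathlib


/-- A poset (given by its order relation `le`) is *past-finite* if the past
`{y | y ≤ x}` of every element `x` is finite. -/
def PastFinite {α : Type} (le : α → α → Prop) : Prop := ∀ x : α, {y : α | le y x}.Finite

/-- The finite poset `s` on `Fin n` *is a stem in* the poset `(α, le)`: there is an
order-embedding of `s` into `(α, le)` whose image is a down-closed (lower) set. -/
def IsStemIn {α : Type} {n : ℕ} (s : Fin n → Fin n → Prop) (le : α → α → Prop) : Prop :=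
  ∃ f : Fin n → α, Function.Injective f ∧ (∀ i j, s i j ↔ le (f i) (f j)) ∧
    ∀ (x : α) (j : Fin n), le x (f j) → ∃ i, f i = x

/-- Two posets *have the same stems* if every finite poset is a stem in one iff it is a
stem in the other (every finite poset is isomorphic to one on some `Fin n`). -/
def SameStems {α β : Type} (le₁ : α → α → Prop) (le₂ : β → β → Prop) : Prop :=
  ∀ (n : ℕ) (s : Fin n → Fin n → Prop), IsStemIn s le₁ ↔ IsStemIn s le₂

/-- The posets `(α, le₁)` and `(β, le₂)` are order-isomorphic. -/
def OrderIsoRel {α β : Type} (le₁ : α → α → Prop) (le₂ : β → β → Prop) : Prop :=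
  ∃ e : α ≃ β, ∀ x y : α, le₁ x y ↔ le₂ (e x) (e y)

/-- Strict order relation associated to `le` (in a partial order). -/
def LtRel {α : Type} (le : α → α → Prop) (x y : α) : Prop := le x y ∧ x ≠ y

/-- `x` is maximal: no element lies strictly above it. -/
def IsMaximalRel {α : Type} (le : α → α → Prop) (x : α) : Prop := ∀ y, le x y → y = x

/-- There is a chain `x₀ < x₁ < ⋯ < x_k = x` (of length `k`) with top element `x`. -/
def ChainTo {α : Type} (le : α → α → Prop) (x : α) (k : ℕ) : Prop :=
  ∃ f : Fin (k + 1) → α, (∀ i j : Fin (k + 1), i < j → LtRel le (f i) (f j)) ∧ f (Fin.last k) = x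

/-- `x` has level `k`: `k` is the maximum length of a chain with top element `x`. -/
def HasLevel {α : Type} (le : α → α → Prop) (x : α) (k : ℕ) : Prop :=
  ChainTo le x k ∧ ∀ m, ChainTo le x m → m ≤ k

/-- A causet (countable past-finite partial order) is *rogue* if there exists a causet
not order-isomorphic to it having the same stems. -/
def IsRogueRel {α : Type} (le : α → α → Prop) : Prop :=
  ∃ (β : Type) (le' : β → β → Prop), IsPartialOrder β le' ∧ Countable β ∧ PastFinite le' ∧
    ¬ OrderIsoRel le le' ∧ SameStems le le'

section
variable {α : Type} {le : α → α → Prop}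

lemma auxChainToZero (x : α) : ChainTo le x 0 :=
  ⟨fun _ => x, fun i j hij => absurd hij (by simp [Fin.lt_def]), rfl⟩

lemma auxChainToSucc (hpo : IsPartialOrder α le) {x z : α} {m : ℕ}
    (hc : ChainTo le z m) (hzx : LtRel le z x) : ChainTo le x (m + 1) := by
  haveI := hpo
  obtain ⟨f, hf, hlast⟩ := hc
  refine ⟨Fin.snoc f x, ?_, by simp⟩
  intro i j hij
  rcases Fin.eq_castSucc_or_eq_last j with ⟨j', rfl⟩ | rfl
  · rcases Fin.eq_castSucc_or_eq_last i with ⟨i', rfl⟩ | rfl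
    · simp only [Fin.snoc_castSucc]
      exact hf i' j' (by exact_mod_cast hij)
    · exact absurd hij (by simp [Fin.lt_def])
  · rcases Fin.eq_castSucc_or_eq_last i with ⟨i', rfl⟩ | rfl
    · simp only [Fin.snoc_castSucc, Fin.snoc_last]
      have hi'z : le (f i') z := by
        rcases eq_or_ne i' (Fin.last m) with rfl | hne
        · rw [hlast]; exact refl_of le z
        · have h2 := hf i' (Fin.last m) (lt_of_le_of_ne (Fin.le_last i') hne)
          rw [hlast] at h2; exact h2.1
      refine ⟨trans_of le hi'z hzx.1, fun h => ?_⟩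
      exact hzx.2 (antisymm_of le hzx.1 (h ▸ hi'z))
    · exact absurd hij (lt_irrefl _)

lemma auxChainToLtCard (hpo : IsPartialOrder α le) (hpf : PastFinite le) {x : α} {m : ℕ}
    (hc : ChainTo le x m) : m < (hpf x).toFinset.card := by
  obtain ⟨f, hf, hlast⟩ := hc
  have hinj : Function.Injective f := by
    intro i j h
    rcases lt_trichotomy i j with hij | rfl | hij
    · exact absurd h (hf i j hij).2
    · rfl
    · exact absurd h.symm (hf j i hij).2
  have hmem : ∀ i, f i ∈ (hpf x).toFinset := by
    intro i
    simp only [Set.Finite.mem_toFinset, Set.mem_setOf_eq]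
    rcases eq_or_ne i (Fin.last m) with rfl | hne
    · rw [hlast]; exact refl_of le x
    · have h2 := hf i (Fin.last m) (lt_of_le_of_ne (Fin.le_last i) hne)
      rw [hlast] at h2; exact h2.1
  have := Finset.card_le_card_of_injOn (s := Finset.univ) f (fun i _ => hmem i) hinj.injOn
  simpa using this

lemma auxExistsLevel (hpo : IsPartialOrder α le) (hpf : PastFinite le) (x : α) :
    ∃ k, HasLevel le x k := by
  classical
  refine ⟨Nat.findGreatest (ChainTo le x) ((hpf x).toFinset.card), ?_, ?_⟩
  · exact Nat.findGreatest_spec (Nat.zero_le _) (auxChainToZero x)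
  · intro m hm
    exact Nat.le_findGreatest (le_of_lt (auxChainToLtCard hpo hpf hm)) hm

lemma auxChainToSamePast {x y : α} {m : ℕ}
    (hpast : {z | LtRel le z x} = {z | LtRel le z y})
    (hc : ChainTo le x m) : ChainTo le y m := by
  cases m with
  | zero => exact auxChainToZero y
  | succ m' =>
    obtain ⟨f, hf, hlast⟩ := hc
    refine ⟨Function.update f (Fin.last (m' + 1)) y, ?_, by simp⟩
    intro i j hij
    have hine : i ≠ Fin.last (m' + 1) := by
      intro h; subst h; exact absurd hij (not_lt.2 (Fin.le_last j))
    rw [Function.update_of_ne hine]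
    rcases eq_or_ne j (Fin.last (m' + 1)) with rfl | hjne
    · rw [Function.update_self]
      have h3 : f i ∈ {z | LtRel le z x} := by
        have h2 := hf i _ hij; rw [hlast] at h2; exact h2
      rw [hpast] at h3; exact h3
    · rw [Function.update_of_ne hjne]; exact hf i j hij

lemma auxLevelSamePast {x y : α} {k : ℕ}
    (hpast : {z | LtRel le z x} = {z | LtRel le z y})
    (h : HasLevel le x k) : HasLevel le y k :=
  ⟨auxChainToSamePast hpast h.1,
   fun m hm => h.2 m (auxChainToSamePast hpast.symm hm)⟩

end


/-- A countable past-finite partial order has an infinite level iff it contains an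
infinite antichain all of whose elements have the same (strict) past. -/
theorem infinite_level_iff_infinite_antichain_same_past (α : Type) (le : α → α → Prop)
    (hpo : IsPartialOrder α le) (hc : Countable α) (hpf : PastFinite le) :
    (∃ k : ℕ, {x : α | HasLevel le x k}.Infinite) ↔
      ∃ A : Set α, A.Infinite ∧
        (∀ x ∈ A, ∀ y ∈ A, x ≠ y → ¬ le x y ∧ ¬ le y x) ∧
        (∀ x ∈ A, ∀ y ∈ A, {z : α | LtRel le z x} = {z : α | LtRel le z y}) := by
  classical
  constructor
  · rintro h
    have hP : ∃ k, {x : α | HasLevel le x k}.Infinite := h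
    set k := Nat.find hP with hkdef
    have hk : {x : α | HasLevel le x k}.Infinite := Nat.find_spec hP
    have hmin : ∀ j < k, ¬ {x : α | HasLevel le x j}.Infinite := fun j hj => Nat.find_min hP hj
    set L : Set α := {z : α | ∃ j < k, HasLevel le z j} with hLdef
    have hL : L.Finite := by
      have heq : L = ⋃ j ∈ Set.Iio k, {z : α | HasLevel le z j} := by
        ext z; simp [hLdef]
      rw [heq]
      exact (Set.finite_Iio k).biUnion fun j hj => Set.not_infinite.1 (hmin j hj)
    have hsub : ∀ x ∈ {x : α | HasLevel le x k}, {z : α | LtRel le z x} ⊆ L := by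
      intro x hx z hz
      obtain ⟨j, hj⟩ := auxExistsLevel hpo hpf z
      refine ⟨j, ?_, hj⟩
      have hchain : ChainTo le x (j + 1) := auxChainToSucc hpo hj.1 hz
      have := hx.2 _ hchain
      omega
    haveI : Infinite ↥{x : α | HasLevel le x k} := hk.to_subtype
    haveI : Finite ↥{t : Set α | t ⊆ L} := hL.finite_subsets.to_subtype
    set F : ↥{x : α | HasLevel le x k} → ↥{t : Set α | t ⊆ L} :=
      fun x => ⟨{z : α | LtRel le z x.1}, hsub x.1 x.2⟩ with hFdef
    obtain ⟨p, hp⟩ := Finite.exists_infinite_fiber F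
    haveI := hp
    refine ⟨{x : α | HasLevel le x k ∧ {z : α | LtRel le z x} = p.1}, ?_, ?_, ?_⟩
    · apply Set.infinite_of_injective_forall_mem
        (f := fun u : ↥(F ⁻¹' {p}) => (u.1 : α))
      · intro u v huv
        exact Subtype.ext (Subtype.ext huv)
      · intro u
        refine ⟨u.1.2, ?_⟩
        have := u.2
        simp only [Set.mem_preimage, Set.mem_singleton_iff, hFdef] at this
        exact congrArg Subtype.val this
    · rintro x ⟨hxk, hxp⟩ y ⟨hyk, hyp⟩ hxy
      constructor
      · intro hle
        have := hyk.2 _ (auxChainToSucc hpo hxk.1 ⟨hle, hxy⟩)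
        omega
      · intro hle
        have := hxk.2 _ (auxChainToSucc hpo hyk.1 ⟨hle, Ne.symm hxy⟩)
        omega
    · rintro x ⟨-, hxp⟩ y ⟨-, hyp⟩
      rw [hxp, hyp]
  · rintro ⟨A, hAinf, -, hApast⟩
    obtain ⟨x0, hx0⟩ := hAinf.nonempty
    obtain ⟨k, hk⟩ := auxExistsLevel hpo hpf x0
    refine ⟨k, hAinf.mono fun y hy => ?_⟩
    exact auxLevelSamePast (hApast x0 hx0 y hy) hk
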